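/- In a connected d-weighted graph with no leaves, the vertices of any foliage-partition class are pairwise strong twins: for any v, w in the same class, N_v \ {w} = N_w \ {v} and there exists a ∈ Z_d with ω_{uv} = a·ω_{uw} for all u ∈ N_w \ {v}. -/

import Mathlib

namespace Foliage

variable {d : ℕ} {V : Type*}

def wGraph (ω : V → V → ZMod d) : SimpleGraph V where
  Adj v w := v ≠ w ∧ (ω v w ≠ 0 ∨ ω w v ≠ 0)
  symm := ⟨fun v w h => ⟨h.1.symm, h.2.symm⟩⟩
  loopless := ⟨fun v h => h.1 rfl⟩

def WRel (ω : V → V → ZMod d) (v w : V) : Prop :=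
  ∀ u₁ u₂ : V, u₁ ≠ v → u₁ ≠ w → u₂ ≠ v → u₂ ≠ w →
    ω v u₁ * ω w u₂ = ω v u₂ * ω w u₁

/-- Degree in a weighted graph: the number of vertices joined by a nonzero weight. -/
noncomputable def wDeg (ω : V → V → ZMod d) (x : V) : ℕ :=
  {u : V | ω x u ≠ 0}.ncard

/-- In a connected weighted graph with no leaves, vertices of the same foliage
class are pairwise strong twins. -/
theorem foliage_class_strong_twins [Fintype V] (hd : Nat.Prime d)
    (ω : V → V → ZMod d)
    (hsymm : ∀ v w, ω v w = ω w v) (hdiag : ∀ v, ω v v = 0)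
    (hconn : (wGraph ω).Connected)
    (hnoleaf : ∀ x : V, wDeg ω x ≠ 1)
    (v w : V) (hrel : WRel ω v w) :
    (∀ u : V, u ≠ v → u ≠ w → (ω v u ≠ 0 ↔ ω w u ≠ 0)) ∧
    ∃ a : ZMod d, ∀ u : V, u ≠ v → u ≠ w → ω w u ≠ 0 → ω u v = a * ω u w := by
  haveI := Fact.mk hd
  by_cases hvw : v = w
  · subst hvw
    exact ⟨fun u _ _ => Iff.rfl, 1, fun u _ _ _ => (one_mul _).symm⟩
  -- key lemma: a vertex x (≠ y) cannot have all weights to vertices outside {x,y} equal to 0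
  have key : ∀ x y : V, x ≠ y → (∀ u, u ≠ x → u ≠ y → ω x u = 0) → False := by
    intro x y hxy h0
    have hsub : {u : V | ω x u ≠ 0} ⊆ {y} := by
      intro u hu
      by_contra huy
      simp only [Set.mem_singleton_iff] at huy
      rcases eq_or_ne u x with rfl | hux
      · exact hu (hdiag u)
      · exact hu (h0 u hux huy)
    have hle : wDeg ω x ≤ 1 := by
      have := Set.ncard_le_ncard hsub (Set.finite_singleton y)
      rw [Set.ncard_singleton] at this; exact this
    have hzero : wDeg ω x = 0 := by
      have := hnoleaf x
      omega
    have hempty : {u : V | ω x u ≠ 0} = ∅ :=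
      (Set.ncard_eq_zero (Set.toFinite _)).mp hzero
    obtain ⟨p⟩ := hconn.preconnected x y
    cases p with
    | nil => exact hxy rfl
    | cons h _ =>
      obtain ⟨hne, hor⟩ := show _ ∧ _ from h
      rw [Set.eq_empty_iff_forall_notMem] at hempty
      rcases hor with h' | h'
      · exact hempty _ h'
      · rw [hsymm] at h'; exact hempty _ h'
  have iff1 : ∀ u : V, u ≠ v → u ≠ w → (ω v u ≠ 0 ↔ ω w u ≠ 0) := by
    intro u huv huw
    constructor
    · intro hv hw0
      refine key w v (Ne.symm hvw) fun u' hu'w hu'v => ?_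
      have h := hrel u u' huv huw hu'v hu'w
      rw [hw0, mul_zero] at h
      rcases mul_eq_zero.mp h with h' | h'
      · exact absurd h' hv
      · exact h'
    · intro hw hv0
      refine key v w hvw fun u' hu'v hu'w => ?_
      have h := hrel u u' huv huw hu'v hu'w
      rw [hv0, zero_mul] at h
      rcases mul_eq_zero.mp h.symm with h' | h'
      · exact h'
      · exact absurd h' hw
  refine ⟨iff1, ?_⟩
  by_cases hex : ∃ u₀ : V, u₀ ≠ v ∧ u₀ ≠ w ∧ ω w u₀ ≠ 0
  · obtain ⟨u₀, h1, h2, h3⟩ := hex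
    refine ⟨ω v u₀ * (ω w u₀)⁻¹, fun u huv huw hwu => ?_⟩
    have h := hrel u₀ u h1 h2 huv huw
    rw [hsymm u v, hsymm u w]
    field_simp
    linear_combination -h
  · refine ⟨0, fun u huv huw hwu => absurd ⟨u, huv, huw, hwu⟩ hex⟩

end Foliage
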